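/- Let L be a rational pseudodifferential operator over a differential field K of characteristic zero. Among all representations L = A S⁻¹ with A, S ∈ K[∂], S ≠ 0, there is a unique one in which S is monic of minimal possible order; moreover, every representation L = Ã S̃⁻¹ is obtained from the minimal one by multiplying both A and S on the right by the same nonzero element of K[∂]. -/
import Mathlib


/-- An axiomatization of the ring `R((∂⁻¹))` of pseudodifferential operators over a
commutative differential ring `(R, δ)`: elements are determined by their coefficients
`coeff A : ℤ → R` (supported in a half-line `n ≤ N`), with the product determined by
`∂ⁿ ∘ a = Σ_{j≥0} binom(n,j) δʲ(a) ∂^{n-j}`, equivalently by the symbol formula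
`coeff (A∘B) k = Σ_{m+n-j=k} binom(m,j) aₘ δʲ(bₙ)`. -/
structure PseudoDiffOps (R : Type) [CommRing R] (δ : R → R) : Type 1 where
  carrier : Type
  [ringCarrier : Ring carrier]
  /-- the embedding of `R` as the operators of order `≤ 0` with only a constant term -/
  const : R →+* carrier
  /-- the derivation `∂` as an element of the ring -/
  d : carrier
  /-- the element `∂⁻¹` -/
  dinv : carrier
  δ_add : ∀ a b : R, δ (a + b) = δ a + δ b
  δ_leibniz : ∀ a b : R, δ (a * b) = δ a * b + a * δ b
  /-- `coeff A n` is the coefficient of `∂ⁿ` in `A` -/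
  coeff : carrier → ℤ → R
  coeff_injective : Function.Injective coeff
  coeff_add : ∀ A B n, coeff (A + B) n = coeff A n + coeff B n
  coeff_one : ∀ n, coeff 1 n = if n = 0 then 1 else 0
  coeff_const : ∀ (a : R) (n), coeff (const a) n = if n = 0 then a else 0
  coeff_d : ∀ n, coeff d n = if n = 1 then 1 else 0
  coeff_dinv : ∀ n, coeff dinv n = if n = -1 then 1 else 0
  d_dinv : d * dinv = 1
  dinv_d : dinv * d = 1
  coeff_bddAbove : ∀ A, ∃ N : ℤ, ∀ n, N < n → coeff A n = 0
  exists_of_coeffs : ∀ f : ℤ → R, (∃ N : ℤ, ∀ n, N < n → f n = 0) → ∃ A, coeff A = f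
  coeff_mul : ∀ (A B : carrier) (NA NB k : ℤ),
    (∀ n, NA < n → coeff A n = 0) → (∀ n, NB < n → coeff B n = 0) →
    coeff (A * B) k =
      ∑ m ∈ Finset.Icc (k - NB) NA, ∑ j ∈ Finset.range ((NB - k + m).toNat + 1),
        ((Ring.choose m j : ℤ) : R) * (coeff A m * δ^[j] (coeff B (k + j - m)))

attribute [instance] PseudoDiffOps.ringCarrier

namespace PseudoDiffOps

variable {R : Type} [CommRing R] {δ : R → R} (P : PseudoDiffOps R δ)

/-- the order of a pseudodifferential operator: the largest `n` with `coeff A n ≠ 0`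
(junk value for `A = 0`). -/
noncomputable def ord (A : P.carrier) : ℤ := sSup {n : ℤ | P.coeff A n ≠ 0}

/-- the leading coefficient of a pseudodifferential operator -/
noncomputable def leadCoeff (A : P.carrier) : R := P.coeff A (P.ord A)

/-- `A` is a differential operator, i.e. lies in `R[∂] ⊆ R((∂⁻¹))` -/
def IsDiffOp (A : P.carrier) : Prop := ∀ n : ℤ, n < 0 → P.coeff A n = 0

/-- `A` is monic, i.e. has leading coefficient `1` -/
noncomputable def Monic (A : P.carrier) : Prop := P.leadCoeff A = 1

end PseudoDiffOps

/-- `S` is a denominator of `L`: `S ∈ K[∂] \ {0}` and `L = A S⁻¹` for some `A ∈ K[∂]` -/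
noncomputable def PseudoDiffOps.IsDenom {K : Type} [CommRing K] {δ : K → K}
    (P : PseudoDiffOps K δ) (L S : P.carrier) : Prop :=
  P.IsDiffOp S ∧ S ≠ 0 ∧ ∃ A : P.carrier, P.IsDiffOp A ∧ L = A * Ring.inverse S

/-- `S` is a monic denominator of `L` of minimal possible order -/
noncomputable def PseudoDiffOps.IsMinimalMonicDenom {K : Type} [CommRing K] {δ : K → K}
    (P : PseudoDiffOps K δ) (L S : P.carrier) : Prop :=
  P.IsDenom L S ∧ P.Monic S ∧ ∀ T : P.carrier, P.IsDenom L T → P.ord S ≤ P.ord T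


namespace PseudoDiffOps

section Basics

variable {K : Type} [Field K] {δ : K → K} (P : PseudoDiffOps K δ)

theorem coeff_zero (n : ℤ) : P.coeff 0 n = 0 := by
  have h := P.coeff_add 0 0 n
  rw [add_zero] at h
  exact (left_eq_add.mp h)

theorem coeff_neg (A : P.carrier) (n : ℤ) : P.coeff (-A) n = - P.coeff A n := by
  have h := P.coeff_add A (-A) n
  rw [add_neg_cancel, P.coeff_zero] at h
  exact eq_neg_of_add_eq_zero_right h.symm

theorem coeff_sub (A B : P.carrier) (n : ℤ) :
    P.coeff (A - B) n = P.coeff A n - P.coeff B n := by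
  rw [sub_eq_add_neg, P.coeff_add, P.coeff_neg, sub_eq_add_neg]

theorem ne_zero_of_coeff {A : P.carrier} {n : ℤ} (h : P.coeff A n ≠ 0) : A ≠ 0 := by
  rintro rfl; exact h (P.coeff_zero n)

theorem bddAbove_support (A : P.carrier) : BddAbove {n : ℤ | P.coeff A n ≠ 0} := by
  obtain ⟨N, hN⟩ := P.coeff_bddAbove A
  exact ⟨N, fun n hn => by by_contra hc; exact hn (hN n (by omega))⟩

theorem support_nonempty {A : P.carrier} (hA : A ≠ 0) :
    Set.Nonempty {n : ℤ | P.coeff A n ≠ 0} := by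
  by_contra h
  apply hA
  apply P.coeff_injective
  funext n
  rw [P.coeff_zero]
  by_contra hc
  exact h ⟨n, hc⟩

theorem ord_spec {A : P.carrier} (hA : A ≠ 0) : P.coeff A (P.ord A) ≠ 0 :=
  Int.csSup_mem (P.support_nonempty hA) (P.bddAbove_support A)

theorem leadCoeff_ne_zero {A : P.carrier} (hA : A ≠ 0) : P.leadCoeff A ≠ 0 :=
  P.ord_spec hA

theorem le_ord {A : P.carrier} {n : ℤ} (h : P.coeff A n ≠ 0) : n ≤ P.ord A :=
  le_csSup (P.bddAbove_support A) h

theorem coeff_eq_zero_of_ord_lt {A : P.carrier} {n : ℤ} (h : P.ord A < n) :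
    P.coeff A n = 0 := by
  by_contra hc
  exact absurd (P.le_ord hc) (not_le.2 h)

theorem ord_le {A : P.carrier} {N : ℤ} (hA : A ≠ 0)
    (h : ∀ n, N < n → P.coeff A n = 0) : P.ord A ≤ N :=
  csSup_le (P.support_nonempty hA) (fun n hn => by by_contra hc; exact hn (h n (by omega)))

theorem ord_eq {A : P.carrier} {N : ℤ} (h1 : P.coeff A N ≠ 0)
    (h2 : ∀ n, N < n → P.coeff A n = 0) : P.ord A = N :=
  le_antisymm (P.ord_le (P.ne_zero_of_coeff h1) h2) (P.le_ord h1)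

theorem delta_zero (P : PseudoDiffOps K δ) : δ (0 : K) = 0 := by
  have h := P.δ_add 0 0
  rw [add_zero] at h
  exact (left_eq_add.mp h)

theorem delta_iterate_zero (P : PseudoDiffOps K δ) (j : ℕ) : δ^[j] (0 : K) = 0 := by
  induction j with
  | zero => rfl
  | succ j ih => rw [Function.iterate_succ_apply, P.delta_zero, ih]

theorem choose_cast_eq_zero {m : ℤ} (hm : 0 ≤ m) {j : ℕ} (hj : m < j) :
    ((Ring.choose m j : ℤ) : K) = 0 := by
  lift m to ℕ using hm
  rw [Ring.choose_natCast, Nat.choose_eq_zero_of_lt (by exact_mod_cast hj)]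
  simp

theorem choose_cast_zero_right (m : ℤ) : ((Ring.choose m 0 : ℤ) : K) = 1 := by
  rw [Ring.choose_zero_right]; simp

/-- the product formula with the orders as bounds -/
theorem coeff_mul_ord {A B : P.carrier} (hA : A ≠ 0) (hB : B ≠ 0) (k : ℤ) :
    P.coeff (A * B) k =
      ∑ m ∈ Finset.Icc (k - P.ord B) (P.ord A),
        ∑ j ∈ Finset.range ((P.ord B - k + m).toNat + 1),
          ((Ring.choose m j : ℤ) : K) * (P.coeff A m * δ^[j] (P.coeff B (k + j - m))) :=
  P.coeff_mul A B (P.ord A) (P.ord B) k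
    (fun _ hn => P.coeff_eq_zero_of_ord_lt hn)
    (fun _ hn => P.coeff_eq_zero_of_ord_lt hn)

theorem coeff_mul_of_ord_lt {A B : P.carrier} (hA : A ≠ 0) (hB : B ≠ 0) {k : ℤ}
    (hk : P.ord A + P.ord B < k) : P.coeff (A * B) k = 0 := by
  rw [P.coeff_mul_ord hA hB k, Finset.Icc_eq_empty (by omega), Finset.sum_empty]

theorem coeff_mul_top {A B : P.carrier} (hA : A ≠ 0) (hB : B ≠ 0) :
    P.coeff (A * B) (P.ord A + P.ord B) = P.leadCoeff A * P.leadCoeff B := by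
  rw [P.coeff_mul_ord hA hB]
  have h1 : P.ord A + P.ord B - P.ord B = P.ord A := by ring
  rw [h1, Finset.Icc_self, Finset.sum_singleton]
  have h2 : (P.ord B - (P.ord A + P.ord B) + P.ord A).toNat = 0 := by omega
  rw [h2, Finset.sum_range_one, choose_cast_zero_right, one_mul,
    Function.iterate_zero_apply]
  have h3 : P.ord A + P.ord B + ((0 : ℕ) : ℤ) - P.ord A = P.ord B := by push_cast; ring
  rw [h3]
  rfl

theorem mul_ne_zero' {A B : P.carrier} (hA : A ≠ 0) (hB : B ≠ 0) : A * B ≠ 0 :=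
  P.ne_zero_of_coeff (n := P.ord A + P.ord B)
    (by rw [P.coeff_mul_top hA hB]
        exact mul_ne_zero (P.leadCoeff_ne_zero hA) (P.leadCoeff_ne_zero hB))

theorem ord_mul {A B : P.carrier} (hA : A ≠ 0) (hB : B ≠ 0) :
    P.ord (A * B) = P.ord A + P.ord B := by
  refine P.ord_eq ?_ ?_
  · rw [P.coeff_mul_top hA hB]
    exact mul_ne_zero (P.leadCoeff_ne_zero hA) (P.leadCoeff_ne_zero hB)
  · exact fun n hn => P.coeff_mul_of_ord_lt hA hB hn

theorem leadCoeff_mul {A B : P.carrier} (hA : A ≠ 0) (hB : B ≠ 0) :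
    P.leadCoeff (A * B) = P.leadCoeff A * P.leadCoeff B := by
  have h := P.coeff_mul_top hA hB
  rw [← P.ord_mul hA hB] at h
  exact h

theorem isDiffOp_zero : P.IsDiffOp 0 := fun n _ => P.coeff_zero n

theorem isDiffOp_one : P.IsDiffOp 1 := fun n hn => by
  rw [P.coeff_one, if_neg (by omega)]

theorem isDiffOp_const (c : K) : P.IsDiffOp (P.const c) := fun n hn => by
  rw [P.coeff_const, if_neg (by omega)]

theorem isDiffOp_d : P.IsDiffOp P.d := fun n hn => by
  rw [P.coeff_d, if_neg (by omega)]

theorem isDiffOp_add {A B : P.carrier} (hA : P.IsDiffOp A) (hB : P.IsDiffOp B) :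
    P.IsDiffOp (A + B) := fun n hn => by
  rw [P.coeff_add, hA n hn, hB n hn, add_zero]

theorem isDiffOp_sub {A B : P.carrier} (hA : P.IsDiffOp A) (hB : P.IsDiffOp B) :
    P.IsDiffOp (A - B) := fun n hn => by
  rw [P.coeff_sub, hA n hn, hB n hn, sub_zero]

theorem isDiffOp_mul {A B : P.carrier} (hA : P.IsDiffOp A) (hB : P.IsDiffOp B) :
    P.IsDiffOp (A * B) := by
  rcases eq_or_ne A 0 with rfl | hA0
  · rw [zero_mul]; exact P.isDiffOp_zero
  rcases eq_or_ne B 0 with rfl | hB0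
  · rw [mul_zero]; exact P.isDiffOp_zero
  intro k hk
  rw [P.coeff_mul_ord hA0 hB0 k]
  refine Finset.sum_eq_zero fun m hm => Finset.sum_eq_zero fun j hj => ?_
  rcases lt_or_ge m 0 with h | h
  · rw [hA m h, zero_mul, mul_zero]
  rcases lt_or_ge (k + j - m) 0 with h2 | h2
  · rw [hB _ h2, P.delta_iterate_zero, mul_zero, mul_zero]
  · rw [choose_cast_eq_zero h (by omega : m < (j : ℤ)), zero_mul]

theorem ord_nonneg {A : P.carrier} (hA : A ≠ 0) (hD : P.IsDiffOp A) : 0 ≤ P.ord A := by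
  by_contra h
  exact P.ord_spec hA (hD _ (by omega))

theorem one_ne_zero' : (1 : P.carrier) ≠ 0 :=
  P.ne_zero_of_coeff (n := 0) (by rw [P.coeff_one, if_pos rfl]; exact one_ne_zero)

theorem ord_one : P.ord (1 : P.carrier) = 0 :=
  P.ord_eq (by rw [P.coeff_one, if_pos rfl]; exact one_ne_zero)
    (fun n hn => by rw [P.coeff_one, if_neg (by omega)])

theorem leadCoeff_one : P.leadCoeff (1 : P.carrier) = 1 := by
  unfold leadCoeff
  rw [P.ord_one, P.coeff_one, if_pos rfl]

theorem const_ne_zero {c : K} (hc : c ≠ 0) : P.const c ≠ 0 :=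
  P.ne_zero_of_coeff (n := 0) (by rw [P.coeff_const, if_pos rfl]; exact hc)

theorem ord_const {c : K} (hc : c ≠ 0) : P.ord (P.const c) = 0 :=
  P.ord_eq (by rw [P.coeff_const, if_pos rfl]; exact hc)
    (fun n hn => by rw [P.coeff_const, if_neg (by omega)])

theorem leadCoeff_const {c : K} (hc : c ≠ 0) : P.leadCoeff (P.const c) = c := by
  unfold leadCoeff
  rw [P.ord_const hc, P.coeff_const, if_pos rfl]

theorem d_ne_zero : P.d ≠ 0 :=
  P.ne_zero_of_coeff (n := 1) (by rw [P.coeff_d, if_pos rfl]; exact one_ne_zero)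

theorem ord_d : P.ord P.d = 1 :=
  P.ord_eq (by rw [P.coeff_d, if_pos rfl]; exact one_ne_zero)
    (fun n hn => by rw [P.coeff_d, if_neg (by omega)])

theorem leadCoeff_d : P.leadCoeff P.d = 1 := by
  unfold leadCoeff
  rw [P.ord_d, P.coeff_d, if_pos rfl]

theorem d_pow_props (k : ℕ) :
    P.d ^ k ≠ 0 ∧ P.ord (P.d ^ k) = k ∧ P.leadCoeff (P.d ^ k) = 1 ∧
      P.IsDiffOp (P.d ^ k) := by
  induction k with
  | zero =>
    rw [pow_zero]
    exact ⟨P.one_ne_zero', by rw [P.ord_one]; rfl, P.leadCoeff_one, P.isDiffOp_one⟩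
  | succ k ih =>
    obtain ⟨h0, hord, hlc, hD⟩ := ih
    rw [pow_succ]
    refine ⟨P.mul_ne_zero' h0 P.d_ne_zero, ?_, ?_, P.isDiffOp_mul hD P.isDiffOp_d⟩
    · rw [P.ord_mul h0 P.d_ne_zero, hord, P.ord_d]; push_cast; ring
    · rw [P.leadCoeff_mul h0 P.d_ne_zero, hlc, P.leadCoeff_d, one_mul]

/-- a nonzero differential operator of order `0` is a constant -/
theorem eq_const_of_ord_eq_zero {A : P.carrier} (hA : A ≠ 0) (hD : P.IsDiffOp A)
    (h : P.ord A = 0) : A = P.const (P.coeff A 0) := by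
  apply P.coeff_injective
  funext n
  rw [P.coeff_const]
  rcases lt_trichotomy n 0 with hn | rfl | hn
  · rw [hD n hn, if_neg (by omega)]
  · rw [if_pos rfl]
  · rw [P.coeff_eq_zero_of_ord_lt (by omega), if_neg (by omega)]

end Basics

section Inverse

variable {K : Type} [Field K]

/-- the body of the recursion computing the coefficients of a right inverse -/
noncomputable def invBody (δ : K → K) (s : ℤ → K) (N : ℤ) (f : ℕ → K) (p : ℕ) : K :=
  (s N)⁻¹ * ((if p = 0 then (1 : K) else 0) -
    ∑ m ∈ Finset.Icc (N - (p : ℤ)) N, ∑ j ∈ Finset.range (((p : ℤ) + m - N).toNat + 1),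
      if m = N ∧ j = 0 then 0 else
        ((Ring.choose m j : ℤ) : K) * (s m * δ^[j] (f ((p : ℤ) + m - N - j).toNat)))

theorem invBody_congr (δ : K → K) (s : ℤ → K) (N : ℤ) {f f' : ℕ → K} (p : ℕ)
    (h : ∀ q < p, f q = f' q) : invBody δ s N f p = invBody δ s N f' p := by
  unfold invBody
  congr 2
  refine Finset.sum_congr rfl fun m hm => Finset.sum_congr rfl fun j hj => ?_
  simp only [Finset.mem_Icc] at hm
  simp only [Finset.mem_range] at hj
  by_cases hmj : m = N ∧ j = 0
  · rw [if_pos hmj, if_pos hmj]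
  · rw [if_neg hmj, if_neg hmj, h _ ?_]
    rcases eq_or_ne m N with rfl | hmN
    · have hj0 : j ≠ 0 := fun h0 => hmj ⟨rfl, h0⟩
      omega
    · omega

/-- auxiliary: the sequence of coefficients computed up to stage `n` -/
noncomputable def invSeqAux (δ : K → K) (s : ℤ → K) (N : ℤ) : ℕ → ℕ → K
  | 0 => fun _ => 0
  | n + 1 => fun p =>
      if p = n then invBody δ s N (invSeqAux δ s N n) n else invSeqAux δ s N n p

/-- the coefficients of the right inverse -/
noncomputable def invSeq (δ : K → K) (s : ℤ → K) (N : ℤ) (p : ℕ) : K :=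
  invBody δ s N (invSeqAux δ s N p) p

theorem invSeqAux_eq (δ : K → K) (s : ℤ → K) (N : ℤ) :
    ∀ n q, q < n → invSeqAux δ s N n q = invSeq δ s N q := by
  intro n
  induction n with
  | zero => omega
  | succ n ih =>
    intro q hq
    by_cases hqn : q = n
    · subst hqn
      show (if q = q then invBody δ s N (invSeqAux δ s N q) q else _) = _
      rw [if_pos rfl]
      rfl
    · show (if q = n then _ else invSeqAux δ s N n q) = _
      rw [if_neg hqn]
      exact ih q (by omega)

theorem invSeq_eq (δ : K → K) (s : ℤ → K) (N : ℤ) (p : ℕ) :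
    invSeq δ s N p = invBody δ s N (invSeq δ s N) p :=
  invBody_congr δ s N p (fun q hq => invSeqAux_eq δ s N p q hq)

variable {δ : K → K} (P : PseudoDiffOps K δ)

theorem exists_right_inv {S : P.carrier} (hS : S ≠ 0) : ∃ T, S * T = 1 := by
  set N := P.ord S with hN
  set s := P.coeff S with hs
  have hlead : s N ≠ 0 := P.ord_spec hS
  set g : ℕ → K := invSeq δ s N with hg
  set f : ℤ → K := fun n => if n ≤ -N then g (-N - n).toNat else 0 with hf
  obtain ⟨T, hT⟩ := P.exists_of_coeffs f ⟨-N, fun n hn => if_neg (by omega)⟩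
  refine ⟨T, P.coeff_injective ?_⟩
  funext k
  have hTc : ∀ n : ℤ, P.coeff T n = f n := fun n => by rw [hT]
  rw [P.coeff_mul S T N (-N) k (fun n hn => P.coeff_eq_zero_of_ord_lt hn)
      (fun n hn => by rw [hTc]; exact if_neg (by omega)), P.coeff_one]
  rcases lt_or_ge 0 k with hk | hk
  · rw [Finset.Icc_eq_empty (by omega), Finset.sum_empty, if_neg (by omega)]
  -- k ≤ 0
  set p : ℕ := (-k).toNat with hp
  have hkp : k = -(p : ℤ) := by omega
  have hsum : ∀ m ∈ Finset.Icc (k - -N) N, ∀ j ∈ Finset.range ((-N - k + m).toNat + 1),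
      ((Ring.choose m j : ℤ) : K) * (P.coeff S m * δ^[j] (P.coeff T (k + j - m))) =
      (if m = N ∧ j = 0 then s N * g p else 0) +
      (if m = N ∧ j = 0 then 0 else
        ((Ring.choose m j : ℤ) : K) * (s m * δ^[j] (g ((p : ℤ) + m - N - j).toNat))) := by
    intro m hm j hj
    simp only [Finset.mem_Icc] at hm
    simp only [Finset.mem_range] at hj
    have harg : P.coeff T (k + j - m) = g ((p : ℤ) + m - N - j).toNat := by
      rw [hTc, hf]
      simp only
      rw [if_pos (by omega : k + j - m ≤ -N)]
      congr 1
      omega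
    by_cases hmj : m = N ∧ j = 0
    · obtain ⟨rfl, rfl⟩ := hmj
      rw [if_pos ⟨rfl, rfl⟩, if_pos ⟨rfl, rfl⟩, add_zero, harg,
        choose_cast_zero_right, one_mul, Function.iterate_zero_apply, ← hs]
      congr 2
      omega
    · rw [if_neg hmj, if_neg hmj, zero_add, harg, ← hs]
  rw [Finset.sum_congr rfl (fun m hm => Finset.sum_congr rfl (fun j hj => hsum m hm j hj))]
  simp only [Finset.sum_add_distrib]
  have h1 : ∑ m ∈ Finset.Icc (k - -N) N, ∑ j ∈ Finset.range ((-N - k + m).toNat + 1),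
      (if m = N ∧ j = 0 then s N * g p else 0) = s N * g p := by
    rw [Finset.sum_eq_single N]
    · rw [Finset.sum_eq_single 0]
      · rw [if_pos ⟨rfl, rfl⟩]
      · intro j _ hj0
        rw [if_neg (fun h => hj0 h.2)]
      · intro h0
        exact absurd (Finset.mem_range.2 (Nat.succ_pos _)) h0
    · intro m _ hmN
      exact Finset.sum_eq_zero fun j _ => if_neg (fun h => hmN h.1)
    · intro hNmem
      exact absurd (Finset.mem_Icc.2 ⟨by omega, le_refl N⟩) hNmem
  rw [h1]
  have e1 : k - -N = N - (p : ℤ) := by omega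
  have e2 : ∀ m : ℤ, (-N - k + m).toNat = ((p : ℤ) + m - N).toNat := fun m => by omega
  rw [e1]
  simp only [e2]
  have hmain : g p = invBody δ s N g p := invSeq_eq δ s N p
  have hmul : s N * g p = (if p = 0 then (1 : K) else 0) -
      ∑ m ∈ Finset.Icc (N - (p : ℤ)) N, ∑ j ∈ Finset.range (((p : ℤ) + m - N).toNat + 1),
        if m = N ∧ j = 0 then 0 else
          ((Ring.choose m j : ℤ) : K) * (s m * δ^[j] (g ((p : ℤ) + m - N - j).toNat)) := by
    rw [hmain]
    unfold invBody
    exact mul_inv_cancel_left₀ hlead _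
  rw [hmul, sub_add_cancel]
  exact if_congr (by omega) rfl rfl

theorem isUnit_of_ne_zero {S : P.carrier} (hS : S ≠ 0) : IsUnit S := by
  obtain ⟨T, hT⟩ := P.exists_right_inv hS
  have hT0 : T ≠ 0 := by
    rintro rfl
    rw [mul_zero] at hT
    exact P.one_ne_zero' hT.symm
  obtain ⟨U, hU⟩ := P.exists_right_inv hT0
  have hUS : U = S := by
    calc U = 1 * U := (one_mul U).symm
    _ = S * T * U := by rw [hT]
    _ = S * (T * U) := mul_assoc _ _ _
    _ = S := by rw [hU, mul_one]
  exact ⟨⟨S, T, hT, hUS ▸ hU⟩, rfl⟩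

end Inverse

section Main

variable {K : Type} [Field K] {δ : K → K} (P : PseudoDiffOps K δ)

theorem isDenom_iff {L S : P.carrier} :
    P.IsDenom L S ↔ P.IsDiffOp S ∧ S ≠ 0 ∧ P.IsDiffOp (L * S) := by
  constructor
  · rintro ⟨hD, hS0, A, hA, rfl⟩
    refine ⟨hD, hS0, ?_⟩
    rwa [mul_assoc, Ring.inverse_mul_cancel S (P.isUnit_of_ne_zero hS0), mul_one]
  · rintro ⟨hD, hS0, hA⟩
    refine ⟨hD, hS0, L * S, hA, ?_⟩
    rw [mul_assoc, Ring.mul_inverse_cancel S (P.isUnit_of_ne_zero hS0), mul_one]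

theorem eq_of_eq_mul_inverse {L A S : P.carrier} (hS0 : S ≠ 0)
    (h : L = A * Ring.inverse S) : A = L * S := by
  rw [h, mul_assoc, Ring.inverse_mul_cancel S (P.isUnit_of_ne_zero hS0), mul_one]

/-- division: every "denominator-like" element is a right multiple of a minimal one -/
theorem exists_right_factor {L S : P.carrier}
    (hSden : P.IsDenom L S) (hSmonic : P.Monic S)
    (hSmin : ∀ T, P.IsDenom L T → P.ord S ≤ P.ord T) :
    ∀ T : P.carrier, P.IsDiffOp T → P.IsDiffOp (L * T) →
      ∃ E, P.IsDiffOp E ∧ T = S * E := by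
  have hS0 : S ≠ 0 := hSden.2.1
  have hSdiff : P.IsDiffOp S := hSden.1
  have hLSdiff : P.IsDiffOp (L * S) := (P.isDenom_iff.mp hSden).2.2
  suffices haux : ∀ n : ℕ, ∀ T : P.carrier, P.IsDiffOp T → P.IsDiffOp (L * T) →
      (T ≠ 0 → (P.ord T).toNat < n) → ∃ E, P.IsDiffOp E ∧ T = S * E by
    intro T hT hLT
    exact haux ((P.ord T).toNat + 1) T hT hLT (fun _ => by omega)
  intro n
  induction n with
  | zero =>
    intro T hT hLT hb
    by_cases hT0 : T = 0
    · exact ⟨0, P.isDiffOp_zero, by rw [hT0, mul_zero]⟩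
    · exact absurd (hb hT0) (by omega)
  | succ n ih =>
    intro T hT hLT hb
    by_cases hT0 : T = 0
    · exact ⟨0, P.isDiffOp_zero, by rw [hT0, mul_zero]⟩
    have hTden : P.IsDenom L T := P.isDenom_iff.mpr ⟨hT, hT0, hLT⟩
    have hord : P.ord S ≤ P.ord T := hSmin T hTden
    have hordS : 0 ≤ P.ord S := P.ord_nonneg hS0 hSdiff
    set c := P.leadCoeff T with hc
    have hc0 : c ≠ 0 := P.leadCoeff_ne_zero hT0
    set kk : ℕ := (P.ord T - P.ord S).toNat with hkk
    obtain ⟨hd0, hdord, hdlc, hdD⟩ := P.d_pow_props kk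
    set C : P.carrier := P.const c * P.d ^ kk with hC
    have hC0 : C ≠ 0 := P.mul_ne_zero' (P.const_ne_zero hc0) hd0
    have hCord : P.ord C = P.ord T - P.ord S := by
      rw [hC, P.ord_mul (P.const_ne_zero hc0) hd0, P.ord_const hc0, hdord, zero_add]
      omega
    have hClc : P.leadCoeff C = c := by
      rw [hC, P.leadCoeff_mul (P.const_ne_zero hc0) hd0, P.leadCoeff_const hc0, hdlc,
        mul_one]
    have hCD : P.IsDiffOp C := P.isDiffOp_mul (P.isDiffOp_const c) hdD
    have hSC0 : S * C ≠ 0 := P.mul_ne_zero' hS0 hC0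
    have hSCord : P.ord (S * C) = P.ord T := by
      rw [P.ord_mul hS0 hC0, hCord]; ring
    have hSClc : P.leadCoeff (S * C) = c := by
      rw [P.leadCoeff_mul hS0 hC0, hSmonic, one_mul, hClc]
    set T' : P.carrier := T - S * C with hT'
    have hT'co : ∀ m : ℤ, P.ord T ≤ m → P.coeff T' m = 0 := by
      intro m hm
      rcases eq_or_lt_of_le hm with rfl | hm'
      · rw [hT', P.coeff_sub]
        have h5 : P.coeff (S * C) (P.ord T) = c := by
          rw [← hSCord]; exact hSClc
        have h4 : P.coeff T (P.ord T) = c := rfl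
        rw [h5, h4, sub_self]
      · rw [hT', P.coeff_sub, P.coeff_eq_zero_of_ord_lt hm',
          P.coeff_eq_zero_of_ord_lt (by rw [hSCord]; exact hm'), sub_zero]
    have hT'D : P.IsDiffOp T' := P.isDiffOp_sub hT (P.isDiffOp_mul hSdiff hCD)
    have hLT'D : P.IsDiffOp (L * T') := by
      have : L * T' = L * T - (L * S) * C := by rw [hT', mul_sub, mul_assoc]
      rw [this]
      exact P.isDiffOp_sub hLT (P.isDiffOp_mul hLSdiff hCD)
    by_cases hT'0 : T' = 0
    · refine ⟨C, hCD, ?_⟩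
      have : T - S * C = 0 := hT'0
      rw [sub_eq_zero] at this
      exact this
    · have hT'ord : P.ord T' < P.ord T := by
        by_contra h
        exact P.ord_spec hT'0 (hT'co _ (by omega))
      have hT'nn : 0 ≤ P.ord T' := P.ord_nonneg hT'0 hT'D
      obtain ⟨E', hE'D, hE'⟩ := ih T' hT'D hLT'D
        (fun _ => by have := hb hT0; omega)
      refine ⟨E' + C, P.isDiffOp_add hE'D hCD, ?_⟩
      rw [mul_add, ← hE', hT']
      simp

end Main

end PseudoDiffOps

/-- a rational pseudodifferential operator `L` has a unique
representation `L = A S⁻¹` with `S` monic of minimal possible order; any other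
representation `L = Ã S̃⁻¹` is obtained from the minimal one by multiplying both `A`
and `S` on the right by the same nonzero element of `K[∂]`. -/
theorem rational_minimal_right_fraction {K : Type} [Field K] [CharZero K] {δ : K → K}
    (P : PseudoDiffOps K δ) (L : P.carrier)
    (hL : ∃ A S : P.carrier, P.IsDiffOp A ∧ P.IsDiffOp S ∧ S ≠ 0 ∧
      L = A * Ring.inverse S) :
    (∃! S : P.carrier, P.IsMinimalMonicDenom L S) ∧
    (∀ A S : P.carrier, P.IsMinimalMonicDenom L S → P.IsDiffOp A →
      L = A * Ring.inverse S →
      ∀ A' S' : P.carrier, P.IsDiffOp A' → P.IsDiffOp S' → S' ≠ 0 →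
        L = A' * Ring.inverse S' →
        ∃ E : P.carrier, P.IsDiffOp E ∧ E ≠ 0 ∧ A' = A * E ∧ S' = S * E) := by
  classical
  obtain ⟨A₁, S₁, hA₁, hS₁, hS₁0, hLrep⟩ := hL
  have hden₁ : P.IsDenom L S₁ := ⟨hS₁, hS₁0, A₁, hA₁, hLrep⟩
  -- the minimal order among denominators
  have hne : ∃ n : ℕ, ∃ S : P.carrier, P.IsDenom L S ∧ (P.ord S).toNat = n :=
    ⟨(P.ord S₁).toNat, S₁, hden₁, rfl⟩
  set n₀ : ℕ := sInf {n : ℕ | ∃ S : P.carrier, P.IsDenom L S ∧ (P.ord S).toNat = n}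
    with hn₀
  obtain ⟨S₀, hS₀den, hS₀ord⟩ : ∃ S : P.carrier, P.IsDenom L S ∧ (P.ord S).toNat = n₀ :=
    Nat.sInf_mem hne
  have hS₀min : ∀ T : P.carrier, P.IsDenom L T → P.ord S₀ ≤ P.ord T := by
    intro T hT
    have h1 : n₀ ≤ (P.ord T).toNat := Nat.sInf_le ⟨T, hT, rfl⟩
    have h2 : 0 ≤ P.ord S₀ := P.ord_nonneg hS₀den.2.1 hS₀den.1
    have h3 : 0 ≤ P.ord T := P.ord_nonneg hT.2.1 hT.1
    omega
  -- normalize to monic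
  have hS₀0 : S₀ ≠ 0 := hS₀den.2.1
  set e : K := (P.leadCoeff S₀)⁻¹ with he
  have he0 : e ≠ 0 := inv_ne_zero (P.leadCoeff_ne_zero hS₀0)
  set Sm : P.carrier := S₀ * P.const e with hSm
  have hSm0 : Sm ≠ 0 := P.mul_ne_zero' hS₀0 (P.const_ne_zero he0)
  have hSmord : P.ord Sm = P.ord S₀ := by
    rw [hSm, P.ord_mul hS₀0 (P.const_ne_zero he0), P.ord_const he0, add_zero]
  have hSmmonic : P.Monic Sm := by
    show P.leadCoeff Sm = 1
    rw [hSm, P.leadCoeff_mul hS₀0 (P.const_ne_zero he0), P.leadCoeff_const he0, he,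
      mul_inv_cancel₀ (P.leadCoeff_ne_zero hS₀0)]
  have hSmden : P.IsDenom L Sm := by
    rw [P.isDenom_iff]
    refine ⟨P.isDiffOp_mul hS₀den.1 (P.isDiffOp_const e), hSm0, ?_⟩
    have : L * Sm = (L * S₀) * P.const e := by rw [hSm, mul_assoc]
    rw [this]
    exact P.isDiffOp_mul (P.isDenom_iff.mp hS₀den).2.2 (P.isDiffOp_const e)
  have hSmmin : ∀ T : P.carrier, P.IsDenom L T → P.ord Sm ≤ P.ord T := by
    intro T hT; rw [hSmord]; exact hS₀min T hT
  have hSmmm : P.IsMinimalMonicDenom L Sm := ⟨hSmden, hSmmonic, hSmmin⟩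
  -- key uniqueness step for any minimal monic denominator S and any denominator T
  have key : ∀ S : P.carrier, P.IsMinimalMonicDenom L S →
      ∀ T : P.carrier, P.IsDiffOp T → T ≠ 0 → P.IsDiffOp (L * T) →
        ∃ E, P.IsDiffOp E ∧ E ≠ 0 ∧ T = S * E := by
    intro S hS T hTD hT0 hLT
    obtain ⟨E, hED, hE⟩ := P.exists_right_factor hS.1 hS.2.1 hS.2.2 T hTD hLT
    refine ⟨E, hED, ?_, hE⟩
    rintro rfl
    rw [mul_zero] at hE
    exact hT0 hE
  constructor
  · -- existence and uniqueness of the minimal monic denominator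
    refine ⟨Sm, hSmmm, ?_⟩
    intro S' hS'
    have hS'den := hS'.1
    have hS'0 : S' ≠ 0 := hS'den.2.1
    obtain ⟨E, hED, hE0, hE⟩ := key Sm hSmmm S' hS'den.1 hS'0
      (P.isDenom_iff.mp hS'den).2.2
    have hordE : P.ord E = 0 := by
      have h1 : P.ord S' = P.ord Sm + P.ord E := by rw [hE, P.ord_mul hSm0 hE0]
      have h2 : P.ord S' ≤ P.ord Sm := hS'.2.2 Sm hSmden
      have h3 : P.ord Sm ≤ P.ord S' := hSmmin S' hS'den
      omega
    have hEconst : E = P.const (P.coeff E 0) :=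
      P.eq_const_of_ord_eq_zero hE0 hED hordE
    have hce : P.coeff E 0 = 1 := by
      have h1 : P.leadCoeff S' = 1 := hS'.2.1
      have h2 : P.leadCoeff E = P.coeff E 0 := by
        unfold PseudoDiffOps.leadCoeff
        rw [hordE]
      rw [hE, P.leadCoeff_mul hSm0 hE0, hSmmonic, one_mul, h2] at h1
      exact h1
    rw [hE, hEconst, hce, map_one, mul_one]
  · -- the general representation statement
    intro A S hSmm hAD hLA A' S' hA'D hS'D hS'0 hL'
    have hS0 : S ≠ 0 := hSmm.1.2.1
    have hAEq : A = L * S := P.eq_of_eq_mul_inverse hS0 hLA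
    have hA'Eq : A' = L * S' := P.eq_of_eq_mul_inverse hS'0 hL'
    have hLS' : P.IsDiffOp (L * S') := hA'Eq ▸ hA'D
    obtain ⟨E, hED, hE0, hE⟩ := key S hSmm S' hS'D hS'0 hLS'
    refine ⟨E, hED, hE0, ?_, hE⟩
    rw [hA'Eq, hE, ← mul_assoc, ← hAEq]
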